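/- Let M be a K_par(G)-module. Then Hom_{K_par(G)}(P_n, M) is isomorphic as a K-module to C^n_par(G,M) := {f : G^n → M | f(g₁,…,g_n) ∈ e_{(g₁,…,g_n)}·M}, via φ ↦ f_φ with f_φ(g₁,…,g_n) = φ(e_{(g₁,…,g_n)}(g₁,…,g_n)), with inverse sending f to φ_f(s(g₁,…,g_n)) = s·f(g₁,…,g_n). -/

import Mathlib

/-- A concrete model of Exel's inverse monoid `S(G)`: pairs `(E, g)` where `E` is a
finite subset of `G` containing `1` and `g`, with product `(E,g)(F,h) = (E ∪ gF, gh)`. -/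
@[ext]
structure ExelS (G : Type*) [Group G] [DecidableEq G] where
  carrier : Finset G
  elt : G
  one_mem : (1 : G) ∈ carrier
  elt_mem : elt ∈ carrier

namespace ExelS

variable {G : Type*} [Group G] [DecidableEq G]

instance : Mul (ExelS G) :=
  ⟨fun s t =>
    ⟨s.carrier ∪ t.carrier.image (s.elt * ·), s.elt * t.elt,
      Finset.mem_union_left _ s.one_mem,
      Finset.mem_union_right _ (Finset.mem_image_of_mem _ t.elt_mem)⟩⟩

instance : One (ExelS G) :=
  ⟨⟨{1}, 1, Finset.mem_singleton_self 1, Finset.mem_singleton_self 1⟩⟩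

/-- The inverse in the inverse monoid `S(G)`. -/
instance : Inv (ExelS G) :=
  ⟨fun s =>
    ⟨s.carrier.image (s.elt⁻¹ * ·), s.elt⁻¹,
      Finset.mem_image.2 ⟨s.elt, s.elt_mem, by simp⟩,
      Finset.mem_image.2 ⟨1, s.one_mem, by simp⟩⟩⟩

@[simp] lemma mul_carrier (s t : ExelS G) :
    (s * t).carrier = s.carrier ∪ t.carrier.image (s.elt * ·) := rfl

@[simp] lemma mul_elt (s t : ExelS G) : (s * t).elt = s.elt * t.elt := rfl

@[simp] lemma one_carrier : (1 : ExelS G).carrier = {1} := rfl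

@[simp] lemma one_elt : (1 : ExelS G).elt = 1 := rfl

@[simp] lemma inv_carrier (s : ExelS G) :
    s⁻¹.carrier = s.carrier.image (s.elt⁻¹ * ·) := rfl

@[simp] lemma inv_elt (s : ExelS G) : s⁻¹.elt = s.elt⁻¹ := rfl

instance : Monoid (ExelS G) where
  mul_assoc a b c := by
    ext x
    · simp only [mul_carrier, Finset.image_union, Finset.image_image, Finset.union_assoc,
        Finset.mem_union, Finset.mem_image, Function.comp]
      constructor <;> rintro (h | h | ⟨y, hy, rfl⟩) <;> simp_all [mul_assoc]
    · simp [mul_assoc]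
  one_mul s := by
    ext x
    · simp only [mul_carrier, one_carrier, one_elt, one_mul, Finset.image_id']
      constructor
      · intro h
        rcases Finset.mem_union.1 h with h | h
        · exact (Finset.mem_singleton.1 h) ▸ s.one_mem
        · exact h
      · exact fun h => Finset.mem_union_right _ h
    · simp
  mul_one s := by
    ext x
    · simp only [mul_carrier, one_carrier, Finset.image_singleton, mul_one]
      constructor
      · intro h
        rcases Finset.mem_union.1 h with h | h
        · exact h
        · exact (Finset.mem_singleton.1 h) ▸ s.elt_mem
      · exact fun h => Finset.mem_union_left _ h
    · simp

/-- The canonical generators `[g]` of Exel's monoid. -/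
def br (g : G) : ExelS G := ⟨{1, g}, g, by simp, by simp⟩

/-- The idempotents `e_g = [g][g⁻¹]`. -/
def eIdem (g : G) : ExelS G := br g * (br g⁻¹ : ExelS G)

end ExelS

namespace ExelS

variable {G : Type*} [Group G] [DecidableEq G]

/-- The idempotent `e_{(g₁,…,g_n)} = e_{g₁} e_{g₁g₂} ⋯ e_{g₁⋯g_n}` of `S(G)`. -/
def eTuple {n : ℕ} (g : Fin n → G) : ExelS G :=
  (List.ofFn fun i : Fin n => eIdem (Fin.partialProd g i.succ)).prod

end ExelS

noncomputable section

open ExelS MonoidAlgebra DirectSum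

variable (K : Type*) [CommRing K] (G : Type*) [Group G] [DecidableEq G]

/-- The `n`-th term `P_n = ⊕_{g₁,…,g_n ∈ G} K_par(G)·e_{(g₁,…,g_n)}` of the projective
resolution, where `K_par(G)·e_{(g₁,…,g_n)}` is the left ideal generated by
`e_{(g₁,…,g_n)}`. -/
def Pmod (n : ℕ) : Type _ :=
  ⨁ (v : Fin n → G), ↥(LinearMap.range (LinearMap.toSpanSingleton
    (MonoidAlgebra K (ExelS G)) (MonoidAlgebra K (ExelS G)) (of K (ExelS G) (eTuple v))))

instance (n : ℕ) : AddCommGroup (Pmod K G n) := by unfold Pmod; infer_instance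

instance (n : ℕ) : Module (MonoidAlgebra K (ExelS G)) (Pmod K G n) := by
  unfold Pmod; infer_instance

variable {M : Type*} [AddCommGroup M] [Module (MonoidAlgebra K (ExelS G)) M]
  [Module K M] [IsScalarTower K (MonoidAlgebra K (ExelS G)) M]
  [SMulCommClass K (MonoidAlgebra K (ExelS G)) M]
  [SMulCommClass (MonoidAlgebra K (ExelS G)) K M]

variable (M) in
/-- The group `C^n_par(G,M)` of partial `n`-cochains: functions `f : Gⁿ → M` with
`f(g₁,…,g_n) ∈ e_{(g₁,…,g_n)}·M`. -/
def Cpar (n : ℕ) : Submodule K ((Fin n → G) → M) where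
  carrier := {f | ∀ v : Fin n → G, of K (ExelS G) (eTuple v) • f v = f v}
  add_mem' := by
    intro f1 f2 h1 h2 v
    simp only [Pi.add_apply, smul_add, h1 v, h2 v]
  zero_mem' := by intro v; simp
  smul_mem' := by
    intro k f hf v
    simp only [Pi.smul_apply]
    rw [smul_comm, hf v]

namespace ExelS

variable {G}

/-- `elt` as a monoid hom. -/
def eltHom : ExelS G →* G := { toFun := elt, map_one' := rfl, map_mul' := fun _ _ => rfl }

lemma mul_self_of_elt_eq_one {s : ExelS G} (h : s.elt = 1) : s * s = s := by
  ext x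
  · simp [h]
  · simp [h]

lemma eTuple_elt {n : ℕ} (g : Fin n → G) : (eTuple g : ExelS G).elt = 1 := by
  show eltHom (eTuple g) = 1
  rw [eTuple, map_list_prod]
  apply List.prod_eq_one
  intro x hx
  simp only [List.mem_map, List.mem_ofFn] at hx
  obtain ⟨a, ⟨i, rfl⟩, rfl⟩ := hx
  show (eIdem _).elt = 1
  simp [eIdem, br]

lemma eTuple_mul_self {n : ℕ} (g : Fin n → G) :
    (eTuple g : ExelS G) * eTuple g = eTuple g :=
  mul_self_of_elt_eq_one (eTuple_elt g)

end ExelS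

set_option maxHeartbeats 1000000 in
/-- `Hom_{K_par(G)}(P_n, M) ≅ C^n_par(G,M)` as `K`-modules, via
`φ ↦ (f_φ : (g₁,…,g_n) ↦ φ(e_{(g₁,…,g_n)}(g₁,…,g_n)))`, with inverse determined by
`φ_f(s(g₁,…,g_n)) = s·f(g₁,…,g_n)`. -/
theorem hom_Pmod_linearEquiv_Cpar (n : ℕ) :
    ∃ L : (Pmod K G n →ₗ[MonoidAlgebra K (ExelS G)] M) ≃ₗ[K] Cpar K G M n,
      (∀ (φ : Pmod K G n →ₗ[MonoidAlgebra K (ExelS G)] M) (v : Fin n → G),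
        (L φ : (Fin n → G) → M) v =
          φ (DirectSum.lof (MonoidAlgebra K (ExelS G)) _ _ v
              ⟨of K (ExelS G) (eTuple v), ⟨1, by simp⟩⟩)) ∧
      ∀ (f : Cpar K G M n) (v : Fin n → G)
        (x : ↥(LinearMap.range (LinearMap.toSpanSingleton
          (MonoidAlgebra K (ExelS G)) (MonoidAlgebra K (ExelS G)) (of K (ExelS G) (eTuple v))))),
        (L.symm f) (DirectSum.lof (MonoidAlgebra K (ExelS G)) _ _ v x) =
          (x : MonoidAlgebra K (ExelS G)) • (f : (Fin n → G) → M) v := by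
  classical
  set A := MonoidAlgebra K (ExelS G) with hA
  set e : (Fin n → G) → A := fun v => of K (ExelS G) (eTuple v) with he_def
  have he : ∀ v, e v * e v = e v := fun v => by
    rw [he_def]; dsimp only; rw [← map_mul, eTuple_mul_self]
  set N : (Fin n → G) → Submodule A A := fun v =>
    LinearMap.range (LinearMap.toSpanSingleton A A (e v)) with hN
  have hmem : ∀ v, e v ∈ N v := fun v => ⟨1, by simp⟩
  have hsm : ∀ v, (e v) • (⟨e v, hmem v⟩ : N v) = ⟨e v, hmem v⟩ := fun v =>
    Subtype.ext (by simp [smul_eq_mul, he v])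
  -- forward map
  let F : (Pmod K G n →ₗ[A] M) → Cpar K G M n := fun φ =>
    ⟨fun v => φ (DirectSum.lof A _ _ v ⟨e v, hmem v⟩), by
      intro v
      dsimp only
      have H : (e v) • (DirectSum.lof A (Fin n → G) (fun w => ↥(N w)) v ⟨e v, hmem v⟩) =
          DirectSum.lof A (Fin n → G) (fun w => ↥(N w)) v ⟨e v, hmem v⟩ := by
        rw [← LinearMap.map_smul]
        exact congrArg _ (Subtype.ext (by simp [smul_eq_mul, he v]))
      exact (map_smul φ _ _).symm.trans (congrArg φ H)⟩
  -- inverse map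
  let Finv : Cpar K G M n → (Pmod K G n →ₗ[A] M) := fun f =>
    DirectSum.toModule A (Fin n → G) M fun v =>
      (LinearMap.toSpanSingleton A M ((f : (Fin n → G) → M) v)).comp (N v).subtype
  have hFinv : ∀ (f : Cpar K G M n) (v : Fin n → G) (x : N v),
      Finv f (DirectSum.lof A _ _ v x) = (x : A) • (f : (Fin n → G) → M) v := by
    intro f v x
    exact DirectSum.toModule_lof
      (φ := fun v => (LinearMap.toSpanSingleton A M ((f : (Fin n → G) → M) v)).comp
        (N v).subtype) A v x
  refine ⟨⟨⟨⟨F, ?_⟩, ?_⟩, Finv, ?_, ?_⟩, fun φ v => rfl, ?_⟩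
  · intro φ ψ; ext v; rfl
  · intro k φ; ext v; rfl
  · -- left inverse
    intro φ
    apply DirectSum.linearMap_ext
    intro v
    ext x
    obtain ⟨c, hc⟩ := x.2
    have hx : (x : A) = c * e v := by
      simpa [LinearMap.toSpanSingleton_apply, smul_eq_mul, he_def] using hc.symm
    simp only [LinearMap.comp_apply]
    refine ((hFinv _ v x).trans ?_)
    show (x : A) • φ (DirectSum.lof A _ _ v ⟨e v, hmem v⟩) = φ (DirectSum.lof A _ _ v x)
    have H : (x : A) • (DirectSum.lof A (Fin n → G) (fun w => ↥(N w)) v ⟨e v, hmem v⟩) =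
        DirectSum.lof A (Fin n → G) (fun w => ↥(N w)) v x := by
      rw [← LinearMap.map_smul]
      exact congrArg _ (Subtype.ext (by simp [smul_eq_mul, hx, mul_assoc, he v]))
    exact (map_smul φ _ _).symm.trans (congrArg φ H)
  · -- right inverse
    intro f
    apply Subtype.ext
    funext v
    show Finv f (DirectSum.lof A _ _ v ⟨e v, hmem v⟩) = _
    exact (hFinv f v ⟨e v, hmem v⟩).trans (f.2 v)
  · intro f v x
    exact hFinv f v x

end
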